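/- Suppose b_0 > 0 and b_{k+1}² = b_k² + γ·r_k where γ > 0, and suppose the non-negative sequence r_k satisfies r_{k+1} ≤ (1 − c/(4·b_{k+1}))·r_k with c > 0 and each factor non-negative. Then for all k, b_k ≤ b_0 + (4γ/c)·r_0. -/

import Mathlib

theorem stmt_7 (γ c : ℝ) (hγ : 0 < γ) (hc : 0 < c) (r b : ℕ → ℝ)
    (hr : ∀ k, 0 ≤ r k) (hb0 : 0 < b 0) (hb : ∀ k, 0 < b k)
    (hbrec : ∀ k, (b (k + 1)) ^ 2 = (b k) ^ 2 + γ * r k)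
    (hfac : ∀ k, 0 ≤ 1 - c / (4 * b (k + 1)))
    (hrrec : ∀ k, r (k + 1) ≤ (1 - c / (4 * b (k + 1))) * r k) :
    ∀ k, b k ≤ b 0 + (4 * γ / c) * r 0 := by
  have hA : 0 < 4 * γ / c := by positivity
  have key : ∀ k, b k + (4 * γ / c) * r k ≤ b 0 + (4 * γ / c) * r 0 := by
    intro k
    induction k with
    | zero => exact le_refl _
    | succ k ih =>
      have hbk := hb k
      have hbk1 := hb (k + 1)
      set q : ℝ := r k / b (k + 1) with hq
      have hq0 : 0 ≤ q := div_nonneg (hr k) hbk1.le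
      have hqb : q * b (k + 1) = r k := by rw [hq]; field_simp
      have hmono : b k ≤ b (k + 1) := by nlinarith [hbrec k, hr k]
      have hstep : b (k + 1) ≤ b k + γ * q := by nlinarith [hbrec k]
      have h2 : r (k + 1) ≤ r k - c / 4 * q := by
        have := hrrec k
        have hexp : (1 - c / (4 * b (k + 1))) * r k = r k - c / 4 * q := by
          rw [hq]
          field_simp
        linarith [hexp ▸ this]
      have h2A : (4 * γ / c) * r (k + 1) ≤ (4 * γ / c) * (r k - c / 4 * q) :=
        mul_le_mul_of_nonneg_left h2 hA.le
      have hcancel : (4 * γ / c) * (c / 4 * q) = γ * q := by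
        field_simp
      nlinarith [h2A, hcancel]
  intro k
  have := key k
  nlinarith [hr k, key k]
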